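/- For the two-phase test, the type-II error probability satisfies limsup_{n→∞} (1/n) log P₂(A₁^τ) ≤ −min{ D(P^(λ₂)‖P₂), γ + k·D(P^(λ)‖P₂) }. -/

import Mathlib

open Real Filter Finset MeasureTheory
open scoped Classical

variable {𝒳 : Type*} [Fintype 𝒳] [DecidableEq 𝒳] [Nonempty 𝒳]

/-- Kullback–Leibler divergence `D(Q‖P)` between pmfs on a finite alphabet. -/
noncomputable def kl (Q P : 𝒳 → ℝ) : ℝ :=
  ∑ x, Q x * Real.log (Q x / P x)

/-- The `λ`-tilted distribution `P^(λ)` of `P₁` and `P₂`. -/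
noncomputable def tilt (P₁ P₂ : 𝒳 → ℝ) (l : ℝ) : 𝒳 → ℝ :=
  fun x => P₁ x ^ (1 - l) * P₂ x ^ l / ∑ a, P₁ a ^ (1 - l) * P₂ a ^ l

/-- Probability of a set of length-`N` sample paths under i.i.d. sampling from `P`. -/
noncomputable def prodProb (P : 𝒳 → ℝ) {N : ℕ} (S : Set (Fin N → 𝒳)) : ℝ :=
  ∑ ω : Fin N → 𝒳, S.indicator (fun ω' => ∏ i, P (ω' i)) ω

/-- The fixed-length error-exponent region `R_FD`. -/
def RFD (P₁ P₂ : 𝒳 → ℝ) : Set (ℝ × ℝ) :=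
  {p | 0 ≤ p.1 ∧ 0 ≤ p.2 ∧
    ∃ l ∈ Set.Icc (0:ℝ) 1,
      p.1 ≤ kl (tilt P₁ P₂ l) P₁ ∧ p.2 ≤ kl (tilt P₁ P₂ l) P₂}

/-- `E₁(γ) = max{D(P^(λ)‖P₁) : λ ∈ [0,1], D(P^(λ)‖P₂) ≥ γ}` (sup of the empty set is 0). -/
noncomputable def E1exp (P₁ P₂ : 𝒳 → ℝ) (γ : ℝ) : ℝ :=
  sSup {E | ∃ l ∈ Set.Icc (0:ℝ) 1, γ ≤ kl (tilt P₁ P₂ l) P₂ ∧ E = kl (tilt P₁ P₂ l) P₁}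

/-- `E₂(γ) = max{D(P^(λ)‖P₂) : λ ∈ [0,1], D(P^(λ)‖P₁) ≥ γ}` (sup of the empty set is 0). -/
noncomputable def E2exp (P₁ P₂ : 𝒳 → ℝ) (γ : ℝ) : ℝ :=
  sSup {E | ∃ l ∈ Set.Icc (0:ℝ) 1, γ ≤ kl (tilt P₁ P₂ l) P₁ ∧ E = kl (tilt P₁ P₂ l) P₂}

/-- A sequential hypothesis test whose stopping time is bounded by `N`:
a stopping time `τ` for the coordinate filtration, together with decision events
`A1`, `A2` that are determined by the samples observed up to time `τ`,
are disjoint, and exhaust the sample space. -/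
structure HypTest (𝒳 : Type*) (N : ℕ) where
  τ : (Fin N → 𝒳) → ℕ
  A1 : Set (Fin N → 𝒳)
  A2 : Set (Fin N → 𝒳)
  tau_le : ∀ ω, τ ω ≤ N
  stopping : ∀ ω ω', (∀ i : Fin N, (i : ℕ) < τ ω → ω i = ω' i) → τ ω' = τ ω
  adapted1 : ∀ ω ω', (∀ i : Fin N, (i : ℕ) < τ ω → ω i = ω' i) → (ω ∈ A1 ↔ ω' ∈ A1)
  adapted2 : ∀ ω ω', (∀ i : Fin N, (i : ℕ) < τ ω → ω i = ω' i) → (ω ∈ A2 ↔ ω' ∈ A2)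
  disj : Disjoint A1 A2
  exhaust : A1 ∪ A2 = Set.univ

/-- `(E₁, E₂)` is achievable by `γ`-almost-fixed-length tests. -/
def AFLAchievable (P₁ P₂ : 𝒳 → ℝ) (γ E₁ E₂ : ℝ) : Prop :=
  0 ≤ E₁ ∧ 0 ≤ E₂ ∧
  ∃ c : ℝ, 0 < c ∧ ∃ l : ℕ, 0 < l ∧
    ∀ δ : ℝ, 0 < δ → ∃ n₀ : ℕ, ∀ n : ℕ, n₀ ≤ n →
      ∃ N : ℕ, (N : ℝ) ≤ c * (n : ℝ) ^ l ∧
        ∃ T : HypTest 𝒳 N,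
          prodProb P₁ {ω | n < T.τ ω} ≤ Real.exp (-(γ * n)) ∧
          prodProb P₂ {ω | n < T.τ ω} ≤ Real.exp (-(γ * n)) ∧
          prodProb P₁ T.A2 ≤ Real.exp (-((E₁ - δ) * n)) ∧
          prodProb P₂ T.A1 ≤ Real.exp (-((E₂ - δ) * n))

/-- `(E₁, E₂, E_Ω)` is achievable by fixed-length tests with a rejection option. -/
def RejAchievable (P₁ P₂ : 𝒳 → ℝ) (E₁ E₂ EΩ : ℝ) : Prop :=
  0 ≤ E₁ ∧ 0 ≤ E₂ ∧ 0 ≤ EΩ ∧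
  ∀ δ : ℝ, 0 < δ → ∃ n₀ : ℕ, ∀ n : ℕ, n₀ ≤ n →
    ∃ A1 A2 AΩ : Set (Fin n → 𝒳),
      Disjoint A1 A2 ∧ Disjoint A1 AΩ ∧ Disjoint A2 AΩ ∧ A1 ∪ A2 ∪ AΩ = Set.univ ∧
      prodProb P₁ A2 ≤ Real.exp (-((E₁ - δ) * n)) ∧
      prodProb P₂ A1 ≤ Real.exp (-((E₂ - δ) * n)) ∧
      prodProb P₁ AΩ + prodProb P₂ AΩ ≤ Real.exp (-((EΩ - δ) * n))

/-- Sum of the log-likelihood ratios of the first `n` samples. -/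
noncomputable def S1 (P₁ P₂ : 𝒳 → ℝ) (n : ℕ) {N : ℕ} (ω : Fin N → 𝒳) : ℝ :=
  ∑ i ∈ Finset.univ.filter (fun i : Fin N => (i : ℕ) < n),
    Real.log (P₁ (ω i) / P₂ (ω i))

/-- Sum of the log-likelihood ratios of the samples after time `n`. -/
noncomputable def S2 (P₁ P₂ : 𝒳 → ℝ) (n : ℕ) {N : ℕ} (ω : Fin N → 𝒳) : ℝ :=
  ∑ i ∈ Finset.univ.filter (fun i : Fin N => n ≤ (i : ℕ)),
    Real.log (P₁ (ω i) / P₂ (ω i))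

/-- Event that the two-phase test (phase-one thresholds `α₁ > β₁`, phase-two threshold `α`)
chooses `H₁`. -/
def twoPhaseA1 (P₁ P₂ : 𝒳 → ℝ) (k n : ℕ) (α₁ β₁ α : ℝ) : Set (Fin ((k + 1) * n) → 𝒳) :=
  {ω | α₁ ≤ S1 P₁ P₂ n ω / n ∨
    (β₁ < S1 P₁ P₂ n ω / n ∧ S1 P₁ P₂ n ω / n < α₁ ∧ α ≤ S2 P₁ P₂ n ω / (k * n))}

/-- Event that the two-phase test chooses `H₂`. -/
def twoPhaseA2 (P₁ P₂ : 𝒳 → ℝ) (k n : ℕ) (α₁ β₁ α : ℝ) : Set (Fin ((k + 1) * n) → 𝒳) :=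
  {ω | S1 P₁ P₂ n ω / n ≤ β₁ ∨
    (β₁ < S1 P₁ P₂ n ω / n ∧ S1 P₁ P₂ n ω / n < α₁ ∧ S2 P₁ P₂ n ω / (k * n) < α)}

/-- Stopping time of the two-phase test: `n` if phase one is decisive, `(k+1)n` otherwise. -/
noncomputable def twoPhaseTau (P₁ P₂ : 𝒳 → ℝ) (k n : ℕ) (α₁ β₁ : ℝ)
    (ω : Fin ((k + 1) * n) → 𝒳) : ℕ :=
  if β₁ < S1 P₁ P₂ n ω / n ∧ S1 P₁ P₂ n ω / n < α₁ then (k + 1) * n else n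
set_option linter.unusedSectionVars false

lemma Zpos (P₁ P₂ : 𝒳 → ℝ) (h1 : ∀ x, 0 < P₁ x) (h2 : ∀ x, 0 < P₂ x) (l : ℝ) :
    0 < ∑ a, P₁ a ^ (1 - l) * P₂ a ^ l :=
  Finset.sum_pos (fun a _ => mul_pos (Real.rpow_pos_of_pos (h1 a) _)
    (Real.rpow_pos_of_pos (h2 a) _)) Finset.univ_nonempty

lemma tilt_pos (P₁ P₂ : 𝒳 → ℝ) (h1 : ∀ x, 0 < P₁ x) (h2 : ∀ x, 0 < P₂ x) (l : ℝ) (x : 𝒳) :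
    0 < tilt P₁ P₂ l x :=
  div_pos (mul_pos (Real.rpow_pos_of_pos (h1 x) _) (Real.rpow_pos_of_pos (h2 x) _))
    (Zpos P₁ P₂ h1 h2 l)

lemma tilt_sum_one (P₁ P₂ : 𝒳 → ℝ) (h1 : ∀ x, 0 < P₁ x) (h2 : ∀ x, 0 < P₂ x) (l : ℝ) :
    ∑ x, tilt P₁ P₂ l x = 1 := by
  simp only [tilt]
  rw [← Finset.sum_div]
  exact div_self (Zpos P₁ P₂ h1 h2 l).ne'

lemma log_tilt (P₁ P₂ : 𝒳 → ℝ) (h1 : ∀ x, 0 < P₁ x) (h2 : ∀ x, 0 < P₂ x) (l : ℝ) (x : 𝒳) :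
    Real.log (tilt P₁ P₂ l x) = (1 - l) * Real.log (P₁ x) + l * Real.log (P₂ x)
      - Real.log (∑ a, P₁ a ^ (1 - l) * P₂ a ^ l) := by
  unfold tilt
  rw [Real.log_div (mul_pos (Real.rpow_pos_of_pos (h1 x) _)
      (Real.rpow_pos_of_pos (h2 x) _)).ne' (Zpos P₁ P₂ h1 h2 l).ne',
    Real.log_mul (Real.rpow_pos_of_pos (h1 x) _).ne' (Real.rpow_pos_of_pos (h2 x) _).ne',
    Real.log_rpow (h1 x), Real.log_rpow (h2 x)]

lemma kl_tilt_right (P₁ P₂ : 𝒳 → ℝ) (h1 : ∀ x, 0 < P₁ x) (h2 : ∀ x, 0 < P₂ x) (l : ℝ) :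
    kl (tilt P₁ P₂ l) P₂
      = (1 - l) * (∑ x, tilt P₁ P₂ l x * Real.log (P₁ x / P₂ x))
        - Real.log (∑ a, P₁ a ^ (1 - l) * P₂ a ^ l) := by
  unfold kl
  have hlog : ∀ x : 𝒳, tilt P₁ P₂ l x * Real.log (tilt P₁ P₂ l x / P₂ x)
      = (1 - l) * (tilt P₁ P₂ l x * Real.log (P₁ x / P₂ x))
        - tilt P₁ P₂ l x * Real.log (∑ a, P₁ a ^ (1 - l) * P₂ a ^ l) := by
    intro x
    rw [Real.log_div (tilt_pos P₁ P₂ h1 h2 l x).ne' (h2 x).ne', log_tilt P₁ P₂ h1 h2 l x,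
      Real.log_div (h1 x).ne' (h2 x).ne']
    ring
  rw [Finset.sum_congr rfl fun x _ => hlog x, Finset.sum_sub_distrib, ← Finset.mul_sum,
    ← Finset.sum_mul, tilt_sum_one P₁ P₂ h1 h2 l, one_mul]

lemma kl_tilt_left (P₁ P₂ : 𝒳 → ℝ) (h1 : ∀ x, 0 < P₁ x) (h2 : ∀ x, 0 < P₂ x) (l : ℝ) :
    kl (tilt P₁ P₂ l) P₁
      = (-l) * (∑ x, tilt P₁ P₂ l x * Real.log (P₁ x / P₂ x))
        - Real.log (∑ a, P₁ a ^ (1 - l) * P₂ a ^ l) := by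
  unfold kl
  have hlog : ∀ x : 𝒳, tilt P₁ P₂ l x * Real.log (tilt P₁ P₂ l x / P₁ x)
      = (-l) * (tilt P₁ P₂ l x * Real.log (P₁ x / P₂ x))
        - tilt P₁ P₂ l x * Real.log (∑ a, P₁ a ^ (1 - l) * P₂ a ^ l) := by
    intro x
    rw [Real.log_div (tilt_pos P₁ P₂ h1 h2 l x).ne' (h1 x).ne', log_tilt P₁ P₂ h1 h2 l x,
      Real.log_div (h1 x).ne' (h2 x).ne']
    ring
  rw [Finset.sum_congr rfl fun x _ => hlog x, Finset.sum_sub_distrib, ← Finset.mul_sum,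
    ← Finset.sum_mul, tilt_sum_one P₁ P₂ h1 h2 l, one_mul]

lemma moment_eq (P₁ P₂ : 𝒳 → ℝ) (h1 : ∀ x, 0 < P₁ x) (h2 : ∀ x, 0 < P₂ x) (l : ℝ) :
    ∑ x, P₂ x * Real.exp ((1 - l) * Real.log (P₁ x / P₂ x))
      = ∑ a, P₁ a ^ (1 - l) * P₂ a ^ l := by
  refine Finset.sum_congr rfl fun x _ => ?_
  rw [Real.log_div (h1 x).ne' (h2 x).ne']
  calc P₂ x * Real.exp ((1 - l) * (Real.log (P₁ x) - Real.log (P₂ x)))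
      = Real.exp (Real.log (P₂ x) + (1 - l) * (Real.log (P₁ x) - Real.log (P₂ x))) := by
        rw [Real.exp_add, Real.exp_log (h2 x)]
    _ = Real.exp (Real.log (P₁ x) * (1 - l)) * Real.exp (Real.log (P₂ x) * l) := by
        rw [← Real.exp_add]; congr 1; ring
    _ = P₁ x ^ (1 - l) * P₂ x ^ l := by
        rw [← Real.rpow_def_of_pos (h1 x), ← Real.rpow_def_of_pos (h2 x)]

lemma card_filter_lt (N n : ℕ) (h : n ≤ N) :
    (Finset.univ.filter (fun i : Fin N => (i : ℕ) < n)).card = n := by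
  rw [Finset.card_filter, Fin.sum_univ_eq_sum_range (fun i => if i < n then (1:ℕ) else 0),
    ← Finset.card_filter]
  have h2 : (Finset.range N).filter (fun i => i < n) = Finset.range n := by
    ext i; simp; omega
  rw [h2, Finset.card_range]

lemma key_sum (P₁ P₂ : 𝒳 → ℝ) (θa θb : ℝ) (N n : ℕ) (h : n ≤ N) :
    ∑ ω : Fin N → 𝒳, Real.exp (θa * S1 P₁ P₂ n ω + θb * S2 P₁ P₂ n ω) * ∏ i, P₂ (ω i)
      = (∑ x, P₂ x * Real.exp (θa * Real.log (P₁ x / P₂ x))) ^ n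
        * (∑ x, P₂ x * Real.exp (θb * Real.log (P₁ x / P₂ x))) ^ (N - n) := by
  set g : Fin N → 𝒳 → ℝ := fun i x =>
    P₂ x * Real.exp ((if (i : ℕ) < n then θa else θb) * Real.log (P₁ x / P₂ x)) with hg
  have hfilter : Finset.univ.filter (fun i : Fin N => ¬ (i : ℕ) < n)
      = Finset.univ.filter (fun i : Fin N => n ≤ (i : ℕ)) := by
    apply Finset.filter_congr; intro i _; simp [not_lt]
  have hcard : (Finset.univ.filter (fun i : Fin N => (i : ℕ) < n)).card = n :=
    card_filter_lt N n h
  have hcard' : (Finset.univ.filter (fun i : Fin N => ¬ (i : ℕ) < n)).card = N - n := by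
    have := Finset.card_filter_add_card_filter_not
      (s := (Finset.univ : Finset (Fin N))) (fun i : Fin N => (i : ℕ) < n)
    rw [Finset.card_univ, Fintype.card_fin] at this
    omega
  have hO : ∀ ω : Fin N → 𝒳,
      Real.exp (θa * S1 P₁ P₂ n ω + θb * S2 P₁ P₂ n ω) * ∏ i, P₂ (ω i)
        = ∏ i, g i (ω i) := by
    intro ω
    have hgi : ∀ i : Fin N, g i (ω i) = P₂ (ω i) *
        (if (i : ℕ) < n then Real.exp (θa * Real.log (P₁ (ω i) / P₂ (ω i)))
          else Real.exp (θb * Real.log (P₁ (ω i) / P₂ (ω i)))) := by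
      intro i; by_cases hi : (i : ℕ) < n <;> simp [hg, hi]
    rw [Finset.prod_congr rfl fun i _ => hgi i, Finset.prod_mul_distrib,
      Finset.prod_ite _ _, hfilter, ← Real.exp_sum, ← Real.exp_sum]
    unfold S1 S2
    rw [← Real.exp_add, Finset.mul_sum, Finset.mul_sum]
    ring
  rw [Finset.sum_congr rfl fun ω _ => hO ω, ← Fintype.piFinset_univ, ← Finset.prod_univ_sum]
  have hZi : ∀ i : Fin N, ∑ x, g i x =
      if (i : ℕ) < n then ∑ x, P₂ x * Real.exp (θa * Real.log (P₁ x / P₂ x))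
      else ∑ x, P₂ x * Real.exp (θb * Real.log (P₁ x / P₂ x)) := by
    intro i; by_cases hi : (i : ℕ) < n <;> simp [hg, hi]
  rw [Finset.prod_congr rfl fun i _ => hZi i, Finset.prod_ite _ _, Finset.prod_const,
    Finset.prod_const, hcard, hcard']




set_option maxHeartbeats 1000000 in
lemma main_bound (P₁ P₂ : 𝒳 → ℝ) (h1 : ∀ x, 0 < P₁ x) (h2 : ∀ x, 0 < P₂ x)
    (h2sum : ∑ x, P₂ x = 1) (γ l₁ l₂ lam : ℝ)
    (hl₁ : l₁ ∈ Set.Icc (0:ℝ) 1) (hl₂ : l₂ ∈ Set.Icc (0:ℝ) 1) (hlam : lam ∈ Set.Icc (0:ℝ) 1)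
    (hγ : γ ≤ kl (tilt P₁ P₂ l₁) P₂) (k n : ℕ) (hk : 0 < k) (hn : 0 < n) :
    prodProb P₂ (twoPhaseA1 P₁ P₂ k n
        (kl (tilt P₁ P₂ l₂) P₂ - kl (tilt P₁ P₂ l₂) P₁)
        (kl (tilt P₁ P₂ l₁) P₂ - kl (tilt P₁ P₂ l₁) P₁)
        (kl (tilt P₁ P₂ lam) P₂ - kl (tilt P₁ P₂ lam) P₁))
      ≤ Real.exp (-((n:ℝ) * kl (tilt P₁ P₂ l₂) P₂))
        + Real.exp (-((n:ℝ) * (γ + (k:ℝ) * kl (tilt P₁ P₂ lam) P₂))) := by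
  have npos : (0:ℝ) < (n:ℝ) := by exact_mod_cast hn
  have knpos : (0:ℝ) < (k:ℝ) * (n:ℝ) := mul_pos (by exact_mod_cast hk) npos
  have hnN : n ≤ (k+1)*n := Nat.le_mul_of_pos_left n (Nat.succ_pos k)
  have hNn : (k+1)*n - n = k * n := by
    have h' : (k+1)*n = k*n + n := by ring
    omega
  have hθ₂ : (0:ℝ) ≤ 1 - l₂ := by linarith [hl₂.2]
  have hθ₁ : (0:ℝ) ≤ 1 - l₁ := by linarith [hl₁.2]
  have hthL : (0:ℝ) ≤ 1 - lam := by linarith [hlam.2]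
  have hZ2 := Zpos P₁ P₂ h1 h2 l₂
  have hZ1 := Zpos P₁ P₂ h1 h2 l₁
  have hZL := Zpos P₁ P₂ h1 h2 lam
  have hk2r := kl_tilt_right P₁ P₂ h1 h2 l₂
  have hk2l := kl_tilt_left P₁ P₂ h1 h2 l₂
  have hk1r := kl_tilt_right P₁ P₂ h1 h2 l₁
  have hk1l := kl_tilt_left P₁ P₂ h1 h2 l₁
  have hkLr := kl_tilt_right P₁ P₂ h1 h2 lam
  have hkLl := kl_tilt_left P₁ P₂ h1 h2 lam
  have hm2 := moment_eq P₁ P₂ h1 h2 l₂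
  have hm1 := moment_eq P₁ P₂ h1 h2 l₁
  have hmL := moment_eq P₁ P₂ h1 h2 lam
  have hm0 : ∑ x, P₂ x * Real.exp ((0:ℝ) * Real.log (P₁ x / P₂ x)) = 1 := by
    simp [h2sum]
  set μ₂ := ∑ x, tilt P₁ P₂ l₂ x * Real.log (P₁ x / P₂ x) with hμ₂def
  set μ₁ := ∑ x, tilt P₁ P₂ l₁ x * Real.log (P₁ x / P₂ x) with hμ₁def
  set muL := ∑ x, tilt P₁ P₂ lam x * Real.log (P₁ x / P₂ x) with hmuLdef
  set Z₂ := ∑ a, P₁ a ^ (1 - l₂) * P₂ a ^ l₂ with hZ₂def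
  set Z₁ := ∑ a, P₁ a ^ (1 - l₁) * P₂ a ^ l₁ with hZ₁def
  set ZL := ∑ a, P₁ a ^ (1 - lam) * P₂ a ^ lam with hZLdef
  clear_value μ₂ μ₁ muL Z₂ Z₁ ZL
  have hα₁ : kl (tilt P₁ P₂ l₂) P₂ - kl (tilt P₁ P₂ l₂) P₁ = μ₂ := by rw [hk2r, hk2l]; ring
  have hβ₁ : kl (tilt P₁ P₂ l₁) P₂ - kl (tilt P₁ P₂ l₁) P₁ = μ₁ := by rw [hk1r, hk1l]; ring
  have havv : kl (tilt P₁ P₂ lam) P₂ - kl (tilt P₁ P₂ lam) P₁ = muL := by rw [hkLr, hkLl]; ring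
  rw [hα₁, hβ₁, havv]
  unfold prodProb
  have hpt : ∀ ω : Fin ((k+1)*n) → 𝒳,
      (twoPhaseA1 P₁ P₂ k n μ₂ μ₁ muL).indicator (fun ω' => ∏ i, P₂ (ω' i)) ω
        ≤ Real.exp ((1-l₂) * (S1 P₁ P₂ n ω - ↑n * μ₂)) * ∏ i, P₂ (ω i)
          + Real.exp ((1-l₁) * (S1 P₁ P₂ n ω - ↑n * μ₁)
              + (1-lam) * (S2 P₁ P₂ n ω - (↑k * ↑n) * muL)) * ∏ i, P₂ (ω i) := by
    intro ω
    have hprod : (0:ℝ) ≤ ∏ i, P₂ (ω i) := Finset.prod_nonneg fun i _ => (h2 _).le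
    have hFnn : (0:ℝ) ≤ Real.exp ((1-l₂) * (S1 P₁ P₂ n ω - ↑n * μ₂)) * ∏ i, P₂ (ω i) :=
      mul_nonneg (Real.exp_nonneg _) hprod
    have hGnn : (0:ℝ) ≤ Real.exp ((1-l₁) * (S1 P₁ P₂ n ω - ↑n * μ₁)
        + (1-lam) * (S2 P₁ P₂ n ω - (↑k * ↑n) * muL)) * ∏ i, P₂ (ω i) :=
      mul_nonneg (Real.exp_nonneg _) hprod
    by_cases hω : ω ∈ twoPhaseA1 P₁ P₂ k n μ₂ μ₁ muL
    · rw [Set.indicator_of_mem hω]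
      simp only [twoPhaseA1, Set.mem_setOf_eq] at hω
      obtain h | ⟨hb, -, hs⟩ := hω
      · have h' : (n:ℝ) * μ₂ ≤ S1 P₁ P₂ n ω := by
          have := (le_div_iff₀ npos).mp h; linarith
        have hone : (1:ℝ) ≤ Real.exp ((1-l₂) * (S1 P₁ P₂ n ω - ↑n * μ₂)) :=
          Real.one_le_exp (mul_nonneg hθ₂ (by linarith))
        nlinarith [mul_le_mul_of_nonneg_right hone hprod]
      · have hb' : (n:ℝ) * μ₁ ≤ S1 P₁ P₂ n ω := by
          have := (le_div_iff₀ npos).mp hb.le; linarith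
        have hs' : ((k:ℝ) * ↑n) * muL ≤ S2 P₁ P₂ n ω := by
          have := (le_div_iff₀ knpos).mp hs; linarith
        have hone : (1:ℝ) ≤ Real.exp ((1-l₁) * (S1 P₁ P₂ n ω - ↑n * μ₁)
            + (1-lam) * (S2 P₁ P₂ n ω - (↑k * ↑n) * muL)) :=
          Real.one_le_exp (add_nonneg (mul_nonneg hθ₁ (by linarith))
            (mul_nonneg hthL (by linarith)))
        nlinarith [mul_le_mul_of_nonneg_right hone hprod]
    · rw [Set.indicator_of_notMem hω]
      exact add_nonneg hFnn hGnn
  have hFsplit : ∀ ω : Fin ((k+1)*n) → 𝒳,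
      Real.exp ((1-l₂) * (S1 P₁ P₂ n ω - ↑n * μ₂))
        = Real.exp (-((1-l₂) * ↑n * μ₂)) * Real.exp ((1-l₂) * S1 P₁ P₂ n ω + 0 * S2 P₁ P₂ n ω) :=
    fun ω => by rw [← Real.exp_add]; exact congrArg Real.exp (by ring)
  have hGsplit : ∀ ω : Fin ((k+1)*n) → 𝒳,
      Real.exp ((1-l₁) * (S1 P₁ P₂ n ω - ↑n * μ₁) + (1-lam) * (S2 P₁ P₂ n ω - (↑k * ↑n) * muL))
        = Real.exp (-((1-l₁) * ↑n * μ₁ + (1-lam) * ((k:ℝ) * ↑n) * muL))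
          * Real.exp ((1-l₁) * S1 P₁ P₂ n ω + (1-lam) * S2 P₁ P₂ n ω) :=
    fun ω => by rw [← Real.exp_add]; exact congrArg Real.exp (by ring)
  have hp2 : Z₂ ^ n = Real.exp ((n:ℝ) * Real.log Z₂) := by
    rw [Real.exp_nat_mul, Real.exp_log hZ2]
  have hp1 : Z₁ ^ n = Real.exp ((n:ℝ) * Real.log Z₁) := by
    rw [Real.exp_nat_mul, Real.exp_log hZ1]
  have hpL : ZL ^ (k * n) = Real.exp ((↑(k*n) : ℝ) * Real.log ZL) := by
    rw [Real.exp_nat_mul, Real.exp_log hZL]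
  have t1 : Real.exp (-((1-l₂) * ↑n * μ₂)) * Z₂ ^ n
      = Real.exp (-((n:ℝ) * kl (tilt P₁ P₂ l₂) P₂)) := by
    rw [hp2, ← Real.exp_add]
    exact congrArg Real.exp (by linear_combination (n:ℝ) * hk2r)
  have t2 : Real.exp (-((1-l₁) * ↑n * μ₁ + (1-lam) * ((k:ℝ) * ↑n) * muL)) * (Z₁ ^ n * ZL ^ (k*n))
      = Real.exp (-((n:ℝ) * kl (tilt P₁ P₂ l₁) P₂ + ((k:ℝ) * ↑n) * kl (tilt P₁ P₂ lam) P₂)) := by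
    rw [hp1, hpL, ← mul_assoc, mul_assoc (Real.exp _), ← Real.exp_add, ← Real.exp_add]
    exact congrArg Real.exp (by push_cast; linear_combination (n:ℝ) * hk1r + ((k:ℝ) * (n:ℝ)) * hkLr)
  have t3 : Real.exp (-((n:ℝ) * kl (tilt P₁ P₂ l₁) P₂ + ((k:ℝ) * ↑n) * kl (tilt P₁ P₂ lam) P₂))
      ≤ Real.exp (-((n:ℝ) * (γ + (k:ℝ) * kl (tilt P₁ P₂ lam) P₂))) := by
    apply Real.exp_le_exp.mpr
    have := mul_le_mul_of_nonneg_left hγ npos.le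
    nlinarith []
  calc ∑ ω : Fin ((k+1)*n) → 𝒳,
        (twoPhaseA1 P₁ P₂ k n μ₂ μ₁ muL).indicator (fun ω' => ∏ i, P₂ (ω' i)) ω
      ≤ ∑ ω : Fin ((k+1)*n) → 𝒳,
          (Real.exp ((1-l₂) * (S1 P₁ P₂ n ω - ↑n * μ₂)) * ∏ i, P₂ (ω i)
            + Real.exp ((1-l₁) * (S1 P₁ P₂ n ω - ↑n * μ₁)
                + (1-lam) * (S2 P₁ P₂ n ω - (↑k * ↑n) * muL)) * ∏ i, P₂ (ω i)) :=
        Finset.sum_le_sum fun ω _ => hpt ω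
    _ = Real.exp (-((1-l₂) * ↑n * μ₂)) *
          ∑ ω : Fin ((k+1)*n) → 𝒳,
            Real.exp ((1-l₂) * S1 P₁ P₂ n ω + 0 * S2 P₁ P₂ n ω) * ∏ i, P₂ (ω i)
        + Real.exp (-((1-l₁) * ↑n * μ₁ + (1-lam) * ((k:ℝ) * ↑n) * muL)) *
          ∑ ω : Fin ((k+1)*n) → 𝒳,
            Real.exp ((1-l₁) * S1 P₁ P₂ n ω + (1-lam) * S2 P₁ P₂ n ω) * ∏ i, P₂ (ω i) := by
        rw [Finset.sum_add_distrib, Finset.mul_sum, Finset.mul_sum]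
        congr 1
        · exact Finset.sum_congr rfl fun ω _ => by rw [hFsplit ω, mul_assoc]
        · exact Finset.sum_congr rfl fun ω _ => by rw [hGsplit ω, mul_assoc]
    _ = Real.exp (-((1-l₂) * ↑n * μ₂)) * (Z₂ ^ n * 1 ^ ((k+1)*n - n))
        + Real.exp (-((1-l₁) * ↑n * μ₁ + (1-lam) * ((k:ℝ) * ↑n) * muL))
          * (Z₁ ^ n * ZL ^ ((k+1)*n - n)) := by
        rw [key_sum P₁ P₂ (1-l₂) 0 _ n hnN, key_sum P₁ P₂ (1-l₁) (1-lam) _ n hnN,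
          hm2, hm1, hmL, hm0]
    _ ≤ Real.exp (-((n:ℝ) * kl (tilt P₁ P₂ l₂) P₂))
        + Real.exp (-((n:ℝ) * (γ + (k:ℝ) * kl (tilt P₁ P₂ lam) P₂))) := by
        rw [hNn, one_pow, mul_one, t1, t2]
        exact add_le_add le_rfl t3


lemma prodProb_lower (P₁ P₂ : 𝒳 → ℝ) (h1 : ∀ x, 0 < P₁ x) (h2 : ∀ x, 0 < P₂ x)
    (α₁ β₁ αv : ℝ) (k n : ℕ) (hn : 0 < n) (x0 : 𝒳)
    (hx0 : α₁ ≤ Real.log (P₁ x0 / P₂ x0)) :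
    P₂ x0 ^ ((k+1)*n) ≤ prodProb P₂ (twoPhaseA1 P₁ P₂ k n α₁ β₁ αv) := by
  have hnN : n ≤ (k+1)*n := Nat.le_mul_of_pos_left n (Nat.succ_pos k)
  set ω₀ : Fin ((k+1)*n) → 𝒳 := fun _ => x0 with hω₀
  have hS1 : S1 P₁ P₂ n ω₀ = n * Real.log (P₁ x0 / P₂ x0) := by
    unfold S1
    simp only [hω₀]
    rw [Finset.sum_const, card_filter_lt _ n hnN, nsmul_eq_mul]
  have hmem : ω₀ ∈ twoPhaseA1 P₁ P₂ k n α₁ β₁ αv := by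
    simp only [twoPhaseA1, Set.mem_setOf_eq]
    left
    rw [hS1, mul_div_cancel_left₀ _ (by exact_mod_cast hn.ne' : (n:ℝ) ≠ 0)]
    exact hx0
  unfold prodProb
  have h0 : P₂ x0 ^ ((k+1)*n)
      = Set.indicator (twoPhaseA1 P₁ P₂ k n α₁ β₁ αv) (fun ω' => ∏ i, P₂ (ω' i)) ω₀ := by
    rw [Set.indicator_of_mem hmem]
    simp [hω₀]
  rw [h0]
  exact Finset.single_le_sum
    (f := fun ω : Fin ((k+1)*n) → 𝒳 =>
      (twoPhaseA1 P₁ P₂ k n α₁ β₁ αv).indicator (fun ω' => ∏ i, P₂ (ω' i)) ω)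
    (fun ω _ => Set.indicator_nonneg
      (fun ω' _ => Finset.prod_nonneg fun i _ => (h2 _).le) ω)
    (Finset.mem_univ ω₀)

/-- Type-II error exponent of the two-phase test:
`limsup (1/n) log P₂(A₁^τ) ≤ −min{D(P^(l₂)‖P₂), γ + k·D(P^(λ)‖P₂)}`. -/
theorem twoPhase_typeII_exponent (P₁ P₂ : 𝒳 → ℝ)
    (h1pos : ∀ x, 0 < P₁ x) (h2pos : ∀ x, 0 < P₂ x)
    (h1sum : ∑ x, P₁ x = 1) (h2sum : ∑ x, P₂ x = 1)
    (hne : P₁ ≠ P₂)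
    (ls : ℝ) (hls : ls ∈ Set.Icc (0:ℝ) 1)
    (hchern : kl (tilt P₁ P₂ ls) P₁ = kl (tilt P₁ P₂ ls) P₂)
    (γ : ℝ) (hγ0 : 0 < γ) (hγD : γ ≤ kl (tilt P₁ P₂ ls) P₁)
    (k : ℕ) (hk : 0 < k)
    (l₁ l₂ lam : ℝ)
    (hl₁ : l₁ ∈ Set.Icc (0:ℝ) 1) (hl₂ : l₂ ∈ Set.Icc (0:ℝ) 1)
    (hlam : lam ∈ Set.Icc (0:ℝ) 1) (hord : l₂ ≤ l₁)
    (hmin : min (kl (tilt P₁ P₂ l₁) P₂) (kl (tilt P₁ P₂ l₂) P₁) = γ) :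
    Filter.limsup (fun n : ℕ =>
        Real.log (prodProb P₂ (twoPhaseA1 P₁ P₂ k n
          (kl (tilt P₁ P₂ l₂) P₂ - kl (tilt P₁ P₂ l₂) P₁)
          (kl (tilt P₁ P₂ l₁) P₂ - kl (tilt P₁ P₂ l₁) P₁)
          (kl (tilt P₁ P₂ lam) P₂ - kl (tilt P₁ P₂ lam) P₁))) / (n : ℝ))
      Filter.atTop
      ≤ -(min (kl (tilt P₁ P₂ l₂) P₂) (γ + k * kl (tilt P₁ P₂ lam) P₂)) := by
  obtain ⟨x0, -, hx0⟩ := Finset.exists_max_image (Finset.univ : Finset 𝒳)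
    (fun x => Real.log (P₁ x / P₂ x)) Finset.univ_nonempty
  have hγ1 : γ ≤ kl (tilt P₁ P₂ l₁) P₂ := by
    rw [← hmin]; exact min_le_left _ _
  -- the sequence
  set p : ℕ → ℝ := fun n => prodProb P₂ (twoPhaseA1 P₁ P₂ k n
      (kl (tilt P₁ P₂ l₂) P₂ - kl (tilt P₁ P₂ l₂) P₁)
      (kl (tilt P₁ P₂ l₁) P₂ - kl (tilt P₁ P₂ l₁) P₁)
      (kl (tilt P₁ P₂ lam) P₂ - kl (tilt P₁ P₂ lam) P₁)) with hp
  set m : ℝ := min (kl (tilt P₁ P₂ l₂) P₂) (γ + k * kl (tilt P₁ P₂ lam) P₂) with hm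
  -- threshold is at most the max log-likelihood ratio
  have hα₁x0 : kl (tilt P₁ P₂ l₂) P₂ - kl (tilt P₁ P₂ l₂) P₁
      ≤ Real.log (P₁ x0 / P₂ x0) := by
    have key : kl (tilt P₁ P₂ l₂) P₂ - kl (tilt P₁ P₂ l₂) P₁
        = ∑ x, tilt P₁ P₂ l₂ x * Real.log (P₁ x / P₂ x) := by
      rw [kl_tilt_right P₁ P₂ h1pos h2pos l₂, kl_tilt_left P₁ P₂ h1pos h2pos l₂]; ring
    rw [key]
    calc ∑ x, tilt P₁ P₂ l₂ x * Real.log (P₁ x / P₂ x)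
        ≤ ∑ x, tilt P₁ P₂ l₂ x * Real.log (P₁ x0 / P₂ x0) :=
          Finset.sum_le_sum fun x _ =>
            mul_le_mul_of_nonneg_left (hx0 x (Finset.mem_univ x))
              (tilt_pos P₁ P₂ h1pos h2pos l₂ x).le
      _ = Real.log (P₁ x0 / P₂ x0) := by
          rw [← Finset.sum_mul, tilt_sum_one P₁ P₂ h1pos h2pos, one_mul]
  have hlow : ∀ n : ℕ, 0 < n → P₂ x0 ^ ((k+1)*n) ≤ p n := fun n hn =>
    prodProb_lower P₁ P₂ h1pos h2pos _ _ _ k n hn x0 hα₁x0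
  have hub : ∀ n : ℕ, 0 < n →
      p n ≤ Real.exp (-((n:ℝ) * kl (tilt P₁ P₂ l₂) P₂))
        + Real.exp (-((n:ℝ) * (γ + (k:ℝ) * kl (tilt P₁ P₂ lam) P₂))) := fun n hn =>
    main_bound P₁ P₂ h1pos h2pos h2sum γ l₁ l₂ lam hl₁ hl₂ hlam hγ1 k n hk hn
  have hposP : ∀ n : ℕ, 0 < n → 0 < p n := fun n hn =>
    lt_of_lt_of_le (pow_pos (h2pos x0) _) (hlow n hn)
  -- upper eventual bound
  have hupper : ∀ n : ℕ, 0 < n → Real.log (p n) / n ≤ Real.log 2 / n + (-m) := by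
    intro n hn
    have npos : (0:ℝ) < (n:ℝ) := by exact_mod_cast hn
    have h2e : p n ≤ 2 * Real.exp (-((n:ℝ) * m)) := by
      have e1 : Real.exp (-((n:ℝ) * kl (tilt P₁ P₂ l₂) P₂)) ≤ Real.exp (-((n:ℝ) * m)) := by
        apply Real.exp_le_exp.mpr
        have := mul_le_mul_of_nonneg_left (min_le_left
          (kl (tilt P₁ P₂ l₂) P₂) (γ + k * kl (tilt P₁ P₂ lam) P₂)) npos.le
        rw [← hm] at this
        linarith
      have e2 : Real.exp (-((n:ℝ) * (γ + (k:ℝ) * kl (tilt P₁ P₂ lam) P₂)))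
          ≤ Real.exp (-((n:ℝ) * m)) := by
        apply Real.exp_le_exp.mpr
        have := mul_le_mul_of_nonneg_left (min_le_right
          (kl (tilt P₁ P₂ l₂) P₂) (γ + k * kl (tilt P₁ P₂ lam) P₂)) npos.le
        rw [← hm] at this
        linarith
      calc p n ≤ _ := hub n hn
        _ ≤ Real.exp (-((n:ℝ) * m)) + Real.exp (-((n:ℝ) * m)) := add_le_add e1 e2
        _ = 2 * Real.exp (-((n:ℝ) * m)) := by ring
    have hlog := Real.log_le_log (hposP n hn) h2e
    rw [Real.log_mul two_ne_zero (Real.exp_ne_zero _), Real.log_exp] at hlog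
    calc Real.log (p n) / n ≤ (Real.log 2 + -((n:ℝ) * m)) / n :=
          (div_le_div_iff_of_pos_right npos).mpr hlog
      _ = Real.log 2 / n + (-m) := by
          rw [add_div, neg_div, mul_div_cancel_left₀ _ npos.ne']
  -- lower eventual bound (coboundedness)
  have hlower : ∀ n : ℕ, 0 < n →
      ((k:ℝ)+1) * Real.log (P₂ x0) ≤ Real.log (p n) / n := by
    intro n hn
    have npos : (0:ℝ) < (n:ℝ) := by exact_mod_cast hn
    have hlog := Real.log_le_log (pow_pos (h2pos x0) _) (hlow n hn)
    rw [Real.log_pow] at hlog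
    have heq : ((↑((k+1)*n) : ℝ) * Real.log (P₂ x0)) / n = ((k:ℝ)+1) * Real.log (P₂ x0) := by
      push_cast
      field_simp
    calc ((k:ℝ)+1) * Real.log (P₂ x0) = (↑((k+1)*n) * Real.log (P₂ x0)) / n := heq.symm
      _ ≤ Real.log (p n) / n := (div_le_div_iff_of_pos_right npos).mpr hlog
  have hcob : Filter.IsCoboundedUnder (· ≤ ·) Filter.atTop
      (fun n : ℕ => Real.log (p n) / n) :=
    Filter.IsCoboundedUnder.of_frequently_ge
      ((Filter.eventually_atTop.mpr ⟨1, fun n hn => hlower n hn⟩).frequently)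
  refine le_of_forall_pos_le_add fun ε hε => ?_
  refine Filter.limsup_le_of_le hcob ?_
  have hev1 : ∀ᶠ n : ℕ in Filter.atTop, Real.log 2 / n < ε :=
    (tendsto_const_div_atTop_nhds_zero_nat (Real.log 2)).eventually_lt_const hε
  filter_upwards [hev1, Filter.eventually_ge_atTop 1] with n h1ε hn1
  calc Real.log (p n) / n ≤ Real.log 2 / n + (-m) := hupper n hn1
    _ ≤ -m + ε := by linarith
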